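/- Fix n ≥ 1 and t > 0. Suppose Ĵ(λ,k) = g(λ, |λ|(2k+n)) where g ∈ 𝒮(ℝ²) is a Schwartz function. Then Σ_{k∈ℕ} ∫_ℝ |e^{Ĵ(λ,k)t} - 1| |λ|ⁿ dλ < ∞. -/

import Mathlib

open MeasureTheory

lemma my_abs_exp_sub_one_le (u : ℝ) : |Real.exp u - 1| ≤ |u| * Real.exp |u| := by
  rcases le_or_gt 0 u with h | h
  · have h0 : (0:ℝ) ≤ Real.exp u - 1 := by
      have := Real.add_one_le_exp u; linarith
    rw [abs_of_nonneg h, abs_of_nonneg h0]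
    have h1 : (-u) + 1 ≤ Real.exp (-u) := Real.add_one_le_exp _
    rw [Real.exp_neg] at h1
    have h2 := Real.exp_pos u
    have h4 : (Real.exp u)⁻¹ * Real.exp u = 1 := inv_mul_cancel₀ h2.ne'
    nlinarith [mul_le_mul_of_nonneg_right h1 h2.le]
  · have h0 : Real.exp u - 1 ≤ 0 := by
      have h' : Real.exp u < Real.exp 0 := Real.exp_lt_exp.2 h
      rw [Real.exp_zero] at h'; linarith
    rw [abs_of_neg h, abs_of_nonpos h0]
    have h2 : u + 1 ≤ Real.exp u := Real.add_one_le_exp u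
    have h3 : 1 ≤ Real.exp (-u) := Real.one_le_exp (by linarith)
    nlinarith

/-- If Ĵ(λ,k) = g(λ, |λ|(2k+n)) for a Schwartz function g on ℝ², then for each t > 0
the function e^{Ĵ(λ,k)t} - 1 belongs to L¹ of the Gelfand spectrum. -/
theorem exp_Jhat_sub_one_L1 (n : ℕ) (hn : 1 ≤ n) (t : ℝ) (ht : 0 < t)
    (Jhat : ℝ → ℕ → ℝ) (g : SchwartzMap (ℝ × ℝ) ℝ)
    (hJ : ∀ (lam : ℝ) (k : ℕ), Jhat lam k = g (lam, |lam| * (2 * k + n))) :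
    (∀ k : ℕ, Integrable fun lam : ℝ => |Real.exp (Jhat lam k * t) - 1| * |lam| ^ n) ∧
    Summable (fun k : ℕ =>
      ∫ lam : ℝ, |Real.exp (Jhat lam k * t) - 1| * |lam| ^ n) := by
  obtain ⟨C0, -, hC0⟩ := g.decay 0 0
  obtain ⟨C2, -, hC2⟩ := g.decay (n + 2) 0
  simp only [pow_zero, one_mul, norm_iteratedFDeriv_zero, Real.norm_eq_abs] at hC0 hC2
  set C0' : ℝ := max C0 0 with hC0'def
  set C2' : ℝ := max C2 0 with hC2'def
  have hC0'0 : (0:ℝ) ≤ C0' := le_max_right _ _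
  have hC2'0 : (0:ℝ) ≤ C2' := le_max_right _ _
  have hg0 : ∀ p : ℝ × ℝ, |g p| ≤ C0' := fun p => le_trans (hC0 p) (hC0'def ▸ le_max_left _ _)
  set D : ℝ := 2 * (C0' + C2') with hDdef
  set K : ℝ := t * Real.exp (t * C0') * D with hKdef
  have hD0 : (0:ℝ) ≤ D := by positivity
  have hK0 : (0:ℝ) ≤ K := by positivity
  set a : ℕ → ℝ := fun k => 2 * k + n with hadef
  have hn1 : (1:ℝ) ≤ (n:ℝ) := by exact_mod_cast hn
  have ha1 : ∀ k, 1 ≤ a k := by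
    intro k
    have : (0:ℝ) ≤ 2 * (k:ℝ) := by positivity
    simp only [hadef]; linarith
  have hapos : ∀ k, 0 < a k := fun k => lt_of_lt_of_le one_pos (ha1 k)
  have haval : ∀ k : ℕ, a k = 2 * k + n := fun k => rfl
  clear_value C0' C2' D K a
  -- key pointwise bound
  have key : ∀ (k : ℕ) (lam : ℝ),
      |Real.exp (Jhat lam k * t) - 1| * |lam| ^ n
        ≤ K / (a k) ^ n * (1 + (a k * lam) ^ 2)⁻¹ := by
    intro k lam
    set p : ℝ × ℝ := (lam, |lam| * (2 * k + n)) with hp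
    have hb0 : |g p| ≤ C0' := hg0 p
    set s : ℝ := a k * |lam| with hsdef
    clear_value s
    have hs0 : 0 ≤ s := hsdef ▸ mul_nonneg (hapos k).le (abs_nonneg _)
    have hb2 : s ^ (n + 2) * |g p| ≤ C2' := by
      have h1 : ‖p.2‖ ≤ ‖p‖ := norm_snd_le p
      have h2 : ‖p.2‖ = s := by
        rw [hsdef, haval k]
        simp only [hp, Real.norm_eq_abs]
        rw [abs_of_nonneg (mul_nonneg (abs_nonneg _) (by positivity : (0:ℝ) ≤ 2 * k + n))]
        ring
      calc s ^ (n + 2) * |g p|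
          ≤ ‖p‖ ^ (n + 2) * |g p| :=
            mul_le_mul_of_nonneg_right (pow_le_pow_left₀ hs0 (h2 ▸ h1) _) (abs_nonneg _)
        _ ≤ C2 := hC2 p
        _ ≤ C2' := hC2'def ▸ le_max_left _ _
    have e1 : |Jhat lam k * t| = |g p| * t := by rw [hJ, abs_mul, abs_of_pos ht]
    have step1 : |Real.exp (Jhat lam k * t) - 1| ≤ t * Real.exp (t * C0') * |g p| := by
      calc |Real.exp (Jhat lam k * t) - 1|
          ≤ |Jhat lam k * t| * Real.exp |Jhat lam k * t| := my_abs_exp_sub_one_le _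
        _ ≤ (|g p| * t) * Real.exp (t * C0') := by
            rw [e1]
            refine mul_le_mul_of_nonneg_left (Real.exp_le_exp.2 ?_) (by positivity)
            calc |g p| * t ≤ C0' * t := mul_le_mul_of_nonneg_right hb0 ht.le
              _ = t * C0' := by ring
        _ = t * Real.exp (t * C0') * |g p| := by ring
    have hsq : (a k * lam) ^ 2 = s ^ 2 := by
      rw [hsdef, mul_pow, mul_pow, sq_abs]
    have hcore : |g p| * s ^ n * (1 + s ^ 2) ≤ D := by
      rcases le_or_gt s 1 with hs | hs
      · have h1 : s ^ n ≤ 1 := pow_le_one₀ hs0 hs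
        have h2 : s ^ 2 ≤ 1 := pow_le_one₀ hs0 hs
        have h3 : 0 ≤ s ^ n := pow_nonneg hs0 n
        have m1 : |g p| * s ^ n ≤ C0' * 1 := mul_le_mul hb0 h1 h3 hC0'0
        have m2 : |g p| * s ^ n * (1 + s ^ 2) ≤ C0' * 2 := by
          calc |g p| * s ^ n * (1 + s ^ 2) ≤ C0' * (1 + s ^ 2) :=
                mul_le_mul_of_nonneg_right (by linarith) (by nlinarith)
            _ ≤ C0' * 2 := mul_le_mul_of_nonneg_left (by linarith) hC0'0
        rw [hDdef]; linarith
      · have h1 : (1:ℝ) ≤ s := hs.le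
        have h2 : (1:ℝ) ≤ s ^ 2 := one_le_pow₀ h1
        have h3 : 0 ≤ s ^ n := pow_nonneg hs0 n
        have m1 : |g p| * s ^ n * (1 + s ^ 2) ≤ |g p| * s ^ n * (2 * s ^ 2) :=
          mul_le_mul_of_nonneg_left (by linarith)
            (mul_nonneg (abs_nonneg _) h3)
        have m2 : |g p| * s ^ n * (2 * s ^ 2) = 2 * (s ^ (n + 2) * |g p|) := by ring
        rw [hDdef]; linarith
    have step2 : |g p| * |lam| ^ n ≤ D / (a k) ^ n * (1 + (a k * lam) ^ 2)⁻¹ := by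
      rw [hsq]
      have hA : (0:ℝ) < (a k) ^ n := pow_pos (hapos k) n
      have hB : (0:ℝ) < 1 + s ^ 2 := by positivity
      have e3 : D / (a k) ^ n * (1 + s ^ 2)⁻¹ = D / ((a k) ^ n * (1 + s ^ 2)) := by
        field_simp
      rw [e3, le_div_iff₀ (mul_pos hA hB)]
      have e2 : |g p| * |lam| ^ n * ((a k) ^ n * (1 + s ^ 2))
          = |g p| * s ^ n * (1 + s ^ 2) := by
        rw [hsdef, mul_pow]; ring
      rw [e2]; exact hcore
    calc |Real.exp (Jhat lam k * t) - 1| * |lam| ^ n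
        ≤ (t * Real.exp (t * C0') * |g p|) * |lam| ^ n :=
          mul_le_mul_of_nonneg_right step1 (by positivity)
      _ = (t * Real.exp (t * C0')) * (|g p| * |lam| ^ n) := by ring
      _ ≤ (t * Real.exp (t * C0')) * (D / (a k) ^ n * (1 + (a k * lam) ^ 2)⁻¹) :=
          mul_le_mul_of_nonneg_left step2 (by positivity)
      _ = K / (a k) ^ n * (1 + (a k * lam) ^ 2)⁻¹ := by rw [hKdef]; ring
  -- continuity / measurability
  have hcont : ∀ k : ℕ, Continuous
      fun lam : ℝ => |Real.exp (Jhat lam k * t) - 1| * |lam| ^ n := by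
    intro k
    have e : (fun lam : ℝ => |Real.exp (Jhat lam k * t) - 1| * |lam| ^ n)
        = fun lam : ℝ =>
          |Real.exp (g (lam, |lam| * (2 * k + n)) * t) - 1| * |lam| ^ n := by
      funext lam; rw [hJ]
    rw [e]
    exact (((Real.continuous_exp.comp ((g.continuous.comp
      (continuous_id.prodMk (continuous_abs.mul continuous_const))).mul
      continuous_const)).sub continuous_const).abs).mul (continuous_abs.pow n)
  -- integrable dominating function
  have hdom : ∀ k : ℕ, Integrable
      fun lam : ℝ => K / (a k) ^ n * (1 + (a k * lam) ^ 2)⁻¹ := fun k =>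
    (integrable_inv_one_add_sq.comp_mul_left' (hapos k).ne').const_mul _
  have hint : ∀ k : ℕ, Integrable
      fun lam : ℝ => |Real.exp (Jhat lam k * t) - 1| * |lam| ^ n := by
    intro k
    refine (hdom k).mono' (hcont k).aestronglyMeasurable (ae_of_all _ fun lam => ?_)
    rw [Real.norm_eq_abs, abs_of_nonneg (by positivity)]
    exact key k lam
  refine ⟨hint, ?_⟩
  -- value of integral of dominating function
  have hIdom : ∀ k : ℕ, (∫ lam : ℝ, K / (a k) ^ n * (1 + (a k * lam) ^ 2)⁻¹)
      = K / (a k) ^ n * ((a k)⁻¹ * Real.pi) := by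
    intro k
    rw [integral_const_mul]
    have e : (∫ lam : ℝ, (1 + (a k * lam) ^ 2)⁻¹)
        = |(a k)⁻¹| • ∫ y : ℝ, (1 + y ^ 2)⁻¹ :=
      Measure.integral_comp_mul_left (fun x => (1 + x ^ 2)⁻¹) (a k)
    rw [e, integral_univ_inv_one_add_sq, smul_eq_mul,
      abs_of_pos (inv_pos.2 (hapos k))]
  -- bound the integrals
  have hIb : ∀ k : ℕ, (∫ lam : ℝ, |Real.exp (Jhat lam k * t) - 1| * |lam| ^ n)
      ≤ K * Real.pi / ((k : ℝ) + 1) ^ 2 := by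
    intro k
    have h1 : (∫ lam : ℝ, |Real.exp (Jhat lam k * t) - 1| * |lam| ^ n)
        ≤ ∫ lam : ℝ, K / (a k) ^ n * (1 + (a k * lam) ^ 2)⁻¹ :=
      integral_mono (hint k) (hdom k) (key k)
    rw [hIdom k] at h1
    refine h1.trans ?_
    have hk1 : ((k : ℝ) + 1) ≤ a k := by
      rw [haval k]; have : (0:ℝ) ≤ (k:ℝ) := Nat.cast_nonneg k; linarith
    have h2 : ((k : ℝ) + 1) ^ 2 ≤ (a k) ^ n * a k := by
      calc ((k : ℝ) + 1) ^ 2 ≤ (a k) ^ 2 := by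
            apply pow_le_pow_left₀ (by positivity) hk1
        _ = (a k) ^ 1 * a k := by ring
        _ ≤ (a k) ^ n * a k :=
            mul_le_mul_of_nonneg_right (pow_le_pow_right₀ (ha1 k) hn) (hapos k).le
    have e : K / (a k) ^ n * ((a k)⁻¹ * Real.pi) = K * Real.pi / ((a k) ^ n * a k) := by
      field_simp
    rw [e]
    exact div_le_div_of_nonneg_left (mul_nonneg hK0 Real.pi_pos.le)
      (by positivity) h2
  -- summability
  have hsum : Summable fun k : ℕ => K * Real.pi / ((k : ℝ) + 1) ^ 2 := by
    have h1 : Summable fun m : ℕ => 1 / (m : ℝ) ^ 2 :=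
      (Real.summable_one_div_nat_pow (p := 2)).2 one_lt_two
    have h2 : Summable fun k : ℕ => 1 / ((k : ℝ) + 1) ^ 2 := by
      have := (summable_nat_add_iff 1).2 h1
      simpa using this
    have h3 := h2.mul_left (K * Real.pi)
    simpa [mul_one_div, div_eq_mul_inv] using h3
  refine Summable.of_nonneg_of_le
    (fun k => integral_nonneg fun lam => by positivity) hIb hsum
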